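/- arXiv:math/0405028 — 3 statements merged into one kernel-verified Lean document; each statement's English description precedes it below -/
import Mathlib

section
/- Let Γ < Isom(ℍᵏ) be a discrete group and {λ_z}_{z∈∂ℍᵏ} a family of positive finite Borel measures on ∂ℍⁿ satisfying: ρ-equivariance λ_{γz} = ρ(γ)_*λ_z for μ_O-a.e. z; μ_O-integrability of z ↦ ∫φ dλ_z for continuous φ; essential boundedness of z ↦ ||λ_z||; and ||λ_z|| > 0 a.e. Then the measures β_x := μ_x * {λ_z} on ∂ℍⁿ satisfy β_{γx} = ρ(γ)_*β_x for all x ∈ ℍᵏ and γ ∈ Γ. -/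
open MeasureTheory
open scoped ENNReal

/-- Equivariance of the measures `β_x = μ_x * {λ_z}`: if `{μ_x}` is the
Patterson–Sullivan family for a discrete group `Γ = G` acting on `ℍᵏ` (with boundary
`K`), satisfying `μ_{γ x} = γ_* μ_x` and `dμ_x = e^{-δ B_K(x,·)} dμ_O`, and if
`{λ_z}_{z ∈ K}` is a family of developing measures for a representation of `Γ` in
`Isom(ℍⁿ)` (acting on the boundary `N`): positive finite measures, a.e.
`ρ`-equivariant, integrable against `μ_O`, with essentially bounded and a.e. positive
total masses — then `β_{γ x} = ρ(γ)_* β_x` for all `x` and `γ`.  Here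
`β_x = μ_x * {λ_z}` is the convolution `(μ x).bind lam`. -/
theorem developing_measures_convolution_equivariant
    {Hk K N : Type*} [MeasurableSpace K] [MeasurableSpace N] [TopologicalSpace N]
    {G : Type*} [Group G] [MulAction G Hk] [MulAction G K] [MulAction G N]
    (hKmeas : ∀ γ : G, Measurable fun z : K => γ • z)
    (hNmeas : ∀ γ : G, Measurable fun y : N => γ • y)
    (O : Hk) (δ : ℝ) (BK : Hk → K → ℝ)
    (μ : Hk → Measure K) [∀ x, IsFiniteMeasure (μ x)]
    (hμequiv : ∀ (γ : G) (x : Hk), μ (γ • x) = Measure.map (fun z : K => γ • z) (μ x))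
    (hμdens : ∀ x : Hk,
      μ x = (μ O).withDensity fun θ => ENNReal.ofReal (Real.exp (-δ * BK x θ)))
    (lam : K → Measure N) (hlam : Measurable lam) [∀ z, IsFiniteMeasure (lam z)]
    -- (1) a.e. ρ-equivariance of the developing measures
    (hlamequiv : ∀ γ : G, ∀ᵐ z ∂μ O, lam (γ • z) = Measure.map (fun y : N => γ • y) (lam z))
    -- (2) integrability of z ↦ ∫ φ dλ_z against μ_O for continuous φ
    (hlamint : ∀ φ : N → ℝ, Continuous φ → Integrable (fun z => ∫ y, φ y ∂lam z) (μ O))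
    -- (3) essential boundedness of z ↦ ‖λ_z‖
    (hlambdd : ∃ C : ℝ≥0∞, C ≠ ⊤ ∧ ∀ᵐ z ∂μ O, lam z Set.univ ≤ C)
    -- (4) a.e. positivity of ‖λ_z‖
    (hlampos : ∀ᵐ z ∂μ O, lam z ≠ 0) :
    ∀ (γ : G) (x : Hk),
      (μ (γ • x)).bind lam = Measure.map (fun y : N => γ • y) ((μ x).bind lam) := by
  intro γ x
  have hac : μ x ≪ μ O := by
    rw [hμdens x]; exact withDensity_absolutelyContinuous _ _
  have hbindmeas : Measurable fun ν : Measure K => ν.bind lam :=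
    Measure.measurable_bind' hlam
  ext s hs
  rw [Measure.map_apply (hNmeas γ) hs, hμequiv γ x,
    Measure.bind_apply hs hlam.aemeasurable, Measure.bind_apply (hs.preimage (hNmeas γ)) hlam.aemeasurable,
    lintegral_map (f := fun z => lam z s) ((Measure.measurable_coe hs).comp hlam) (hKmeas γ)]
  refine lintegral_congr_ae ?_
  filter_upwards [hac.ae_le (hlamequiv γ)] with z hz
  rw [hz, Measure.map_apply (hNmeas γ) hs]
end

section
/- Let μ_O be a finite Borel measure on ∂ℍᵏ, Γ a non-elementary discrete group with Patterson–Sullivan family {μ_x}. For ω ∈ ∂ℍᵏ and α ∈ (0,π/2), define the maximal operator M_α g(ω) = sup over γ ∈ Γ with γO in the vertical cone C_ω(α) of ∫ g dμ_{γO}, and the Hardy–Littlewood operator N g(ω) = sup_{r>0} (1/μ_O(B(ω,r))) ∫_{B(ω,r)} g dμ_O. Then there is a constant c = c(α) such that for all nonnegative g ∈ L¹(∂ℍᵏ, μ_O) and all ω, M_α g(ω) ≤ c · N g(ω). -/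
open MeasureTheory Metric
open scoped ENNReal

lemma aux_le_mul_inv {a b : ℝ≥0∞} (hb : b ≠ ⊤) (h0 : b = 0 → a = 0) :
    a ≤ b * (b⁻¹ * a) := by
  rcases eq_or_ne b 0 with h | h
  · simp [h0 h]
  · rw [← mul_assoc, ENNReal.mul_inv_cancel h hb, one_mul]

lemma aux_cone {T t : ℝ} (hT : 0 < T) (ht : 0 < t) {s d : ℝ} (hs : 0 ≤ s) (hd : 0 ≤ d)
    (htri : d ≤ s + T * t) :
    (2 * (1 + T ^ 2))⁻¹ * (d ^ 2 + t ^ 2) ≤ s ^ 2 + t ^ 2 := by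
  have h2 : d ^ 2 + t ^ 2 ≤ 2 * (1 + T ^ 2) * (s ^ 2 + t ^ 2) := by
    nlinarith [sq_nonneg (s - T * t), mul_nonneg hT.le ht.le, sq_nonneg (s + T * t)]
  have hc₁ : (0:ℝ) < (2 * (1 + T ^ 2))⁻¹ := by positivity
  calc (2 * (1 + T ^ 2))⁻¹ * (d ^ 2 + t ^ 2)
      ≤ (2 * (1 + T ^ 2))⁻¹ * (2 * (1 + T ^ 2) * (s ^ 2 + t ^ 2)) :=
        mul_le_mul_of_nonneg_left h2 hc₁.le
    _ = s ^ 2 + t ^ 2 := by field_simp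

lemma aux_dyadic {t : ℝ} (ht : 0 < t) (d : ℝ) (hd : 0 ≤ d) :
    ∃ j : ℕ, d < 2 ^ j * t ∧ t / (d ^ 2 + t ^ 2) ≤ 4 / 4 ^ j / t := by
  classical
  have hex : ∃ n : ℕ, d < 2 ^ n * t := by
    obtain ⟨n, hn⟩ := pow_unbounded_of_one_lt (d / t) (by norm_num : (1 : ℝ) < 2)
    exact ⟨n, by rwa [div_lt_iff₀ ht] at hn⟩
  set j := Nat.find hex with hjdef
  have hj : d < 2 ^ j * t := Nat.find_spec hex
  refine ⟨j, hj, ?_⟩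
  have hDj : (4 : ℝ) ^ j * t ^ 2 ≤ 4 * (d ^ 2 + t ^ 2) := by
    rcases Nat.eq_zero_or_pos j with h0 | hjpos
    · rw [h0]
      nlinarith [sq_nonneg d]
    · have hm : ¬ d < 2 ^ (j - 1) * t := Nat.find_min hex (Nat.sub_lt hjpos one_pos)
      push_neg at hm
      have h4 : (4 : ℝ) ^ (j - 1) * t ^ 2 ≤ d ^ 2 := by
        have hsq := mul_le_mul hm hm (by positivity) hd
        have h44 : (4 : ℝ) ^ (j - 1) = 2 ^ (j - 1) * 2 ^ (j - 1) := by
          rw [← mul_pow]; norm_num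
        nlinarith [hsq]
      have h4j : (4 : ℝ) ^ j = 4 * 4 ^ (j - 1) := by
        rw [← pow_succ']
        congr 1
        omega
      rw [h4j]
      linarith [h4, sq_nonneg t]
  rw [div_div, div_le_div_iff₀ (by positivity) (by positivity)]
  nlinarith [hDj]

lemma aux_calc {t c₀ δ : ℝ} (ht : 0 < t) (hc₀ : 0 ≤ c₀) (j : ℕ) :
    (4 / 4 ^ j / t) ^ δ * (c₀ * ((2 : ℝ) ^ j * t) ^ δ)
      = c₀ * 4 ^ δ * ((1 / 2 : ℝ) ^ δ) ^ j := by
  have h1 : (4 / 4 ^ j / t : ℝ) ^ δ * ((2 : ℝ) ^ j * t) ^ δ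
      = ((4 / 4 ^ j / t) * ((2 : ℝ) ^ j * t)) ^ δ :=
    (Real.mul_rpow (by positivity) (by positivity)).symm
  have h2 : ((4 / 4 ^ j / t) * ((2 : ℝ) ^ j * t)) = 4 * (1 / 2 : ℝ) ^ j := by
    have h4 : (4 : ℝ) ^ j = 2 ^ j * 2 ^ j := by rw [← mul_pow]; norm_num
    field_simp [h4]
    rw [h4, mul_assoc, ← mul_pow]; norm_num
  have h3 : ((1 / 2 : ℝ) ^ j) ^ δ = ((1 / 2 : ℝ) ^ δ) ^ j := by
    rw [← Real.rpow_natCast ((1 / 2 : ℝ)) j, ← Real.rpow_natCast ((1 / 2 : ℝ) ^ δ) j,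
      ← Real.rpow_mul (by norm_num), ← Real.rpow_mul (by norm_num)]
    ring_nf
  calc (4 / 4 ^ j / t : ℝ) ^ δ * (c₀ * ((2 : ℝ) ^ j * t) ^ δ)
      = c₀ * ((4 / 4 ^ j / t : ℝ) ^ δ * ((2 : ℝ) ^ j * t) ^ δ) := by ring
    _ = c₀ * ((4 * (1 / 2 : ℝ) ^ j) ^ δ) := by rw [h1, h2]
    _ = c₀ * (4 ^ δ * ((1 / 2 : ℝ) ^ j) ^ δ) := by
        rw [Real.mul_rpow (by norm_num) (by positivity)]
    _ = c₀ * 4 ^ δ * ((1 / 2 : ℝ) ^ δ) ^ j := by rw [h3]; ring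

/-- Domination of the maximal operator by the Hardy–Littlewood operator, in the
half-space model: the boundary is `E = ℝ^{k-1}` (attention restricted to a fixed ball of
radius `R`, on which `μ = μ_O` is concentrated), the Patterson–Sullivan densities are
`dμ_{γO}(ξ) = (x_k (1+|ξ|²)/(|ξ-x'|²+x_k²))^δ dμ_O(ξ)` for the orbit point
`γO = (x', x_k)`, the cone `C_ω(α)` is the vertical cone of vertex `ω` and half-angle
`α`, and `μ` satisfies the growth bound `μ(B(ω,r)) ≤ c₀ rᵟ`.  Then there is a constant
`c = c(α)` such that for every nonnegative `g ∈ L¹(μ)` and every `ω`,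
`M_α g(ω) ≤ c ⋅ N g(ω)`, where
`M_α g(ω) = sup {∫ g dμ_{γO} : γO ∈ C_ω(α)}` and
`N g(ω) = sup_{r>0} μ(B(ω,r))⁻¹ ∫_{B(ω,r)} g dμ`. -/
theorem maximal_operator_le_hardyLittlewood
    (k : ℕ) (δ : ℝ) (hδ : 0 < δ)
    (μ : Measure (EuclideanSpace ℝ (Fin k))) [IsFiniteMeasure μ]
    (R : ℝ) (hR : 0 < R)
    (hsupp : μ (closedBall (0 : EuclideanSpace ℝ (Fin k)) R)ᶜ = 0)
    (c₀ : ℝ) (hc₀ : 0 < c₀)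
    (hgrowth : ∀ (ω : EuclideanSpace ℝ (Fin k)) (r : ℝ), 0 < r →
      μ (ball ω r) ≤ ENNReal.ofReal (c₀ * r ^ δ))
    (orbit : Set (EuclideanSpace ℝ (Fin k) × ℝ))
    (hpos : ∀ p ∈ orbit, 0 < p.2)
    (α : ℝ) (hα : α ∈ Set.Ioo 0 (Real.pi / 2)) :
    ∃ c : ℝ≥0∞, 0 < c ∧ c ≠ ⊤ ∧
      ∀ g : EuclideanSpace ℝ (Fin k) → ℝ≥0∞, Measurable g → (∫⁻ ξ, g ξ ∂μ) ≠ ⊤ →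
        ∀ ω : EuclideanSpace ℝ (Fin k),
          (⨆ (p : EuclideanSpace ℝ (Fin k) × ℝ) (_ : p ∈ orbit)
              (_ : ‖p.1 - ω‖ ≤ Real.tan α * p.2),
            ∫⁻ ξ, g ξ *
              ENNReal.ofReal ((p.2 * (1 + ‖ξ‖ ^ 2) / (‖ξ - p.1‖ ^ 2 + p.2 ^ 2)) ^ δ) ∂μ)
          ≤ c * ⨆ (r : ℝ) (_ : 0 < r),
              (μ (ball ω r))⁻¹ * ∫⁻ ξ in ball ω r, g ξ ∂μ := by
  classical
  obtain ⟨hα0, hα2⟩ := hα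
  set T := Real.tan α with hTdef
  have hT : 0 < T := Real.tan_pos_of_pos_of_lt_pi_div_two hα0 hα2
  set c₁ : ℝ := (2 * (1 + T ^ 2))⁻¹ with hc₁def
  have hc₁ : 0 < c₁ := by positivity
  set Cα : ℝ := ((1 + R ^ 2) / c₁) ^ δ with hCαdef
  have hCα : 0 < Cα := Real.rpow_pos_of_pos (by positivity) δ
  set r0 : ℝ := (1 / 2 : ℝ) ^ δ with hr0def
  have hr0 : 0 < r0 := Real.rpow_pos_of_pos (by norm_num) δ
  have hr1 : r0 < 1 := Real.rpow_lt_one (by norm_num) (by norm_num) hδ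
  have hgeom : (1 : ℝ≥0∞) - ENNReal.ofReal r0 ≠ 0 := by
    simp only [ne_eq, tsub_eq_zero_iff_le, ENNReal.one_le_ofReal]
    linarith
  set S : ℝ≥0∞ := ENNReal.ofReal (c₀ * 4 ^ δ) * (1 - ENNReal.ofReal r0)⁻¹ with hSdef
  have hS0 : 0 < S := by
    apply ENNReal.mul_pos
    · simp only [ne_eq, ENNReal.ofReal_eq_zero, not_le]
      positivity
    · simp only [ne_eq, ENNReal.inv_eq_zero]
      exact (tsub_le_self.trans_lt ENNReal.one_lt_top).ne
  have hStop : S ≠ ⊤ :=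
    ENNReal.mul_ne_top ENNReal.ofReal_ne_top (ENNReal.inv_ne_top.mpr hgeom)
  refine ⟨ENNReal.ofReal Cα * S, ?_, ?_, ?_⟩
  · exact ENNReal.mul_pos (by simp [ENNReal.ofReal_eq_zero, not_le, hCα.le]; positivity) hS0.ne'
  · exact ENNReal.mul_ne_top ENNReal.ofReal_ne_top hStop
  intro g hg _ ω
  set N := ⨆ (r : ℝ) (_ : 0 < r),
      (μ (ball ω r))⁻¹ * ∫⁻ ξ in ball ω r, g ξ ∂μ with hNdef
  refine iSup_le fun p => iSup_le fun hp => iSup_le fun hcone => ?_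
  have ht : 0 < p.2 := hpos p hp
  set t := p.2
  set x := p.1
  -- kernel K' centered at ω
  have hK'cont : Continuous fun ξ : EuclideanSpace ℝ (Fin k) =>
      (t / (‖ξ - ω‖ ^ 2 + t ^ 2)) ^ δ := by
    have h1 : Continuous fun ξ : EuclideanSpace ℝ (Fin k) => ‖ξ - ω‖ ^ 2 + t ^ 2 :=
      (((continuous_id.sub continuous_const).norm.pow 2).add continuous_const)
    have h2 : Continuous fun ξ : EuclideanSpace ℝ (Fin k) => t / (‖ξ - ω‖ ^ 2 + t ^ 2) :=
      continuous_const.div h1 fun ξ => by positivity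
    exact h2.rpow_const fun ξ => Or.inr hδ.le
  have hK'm : Measurable fun ξ : EuclideanSpace ℝ (Fin k) =>
      ENNReal.ofReal ((t / (‖ξ - ω‖ ^ 2 + t ^ 2)) ^ δ) :=
    (ENNReal.continuous_ofReal.comp hK'cont).measurable
  -- geometric lemma: cone condition pushes the kernel to be centered at ω
  have hgeo : ∀ ξ : EuclideanSpace ℝ (Fin k),
      c₁ * (‖ξ - ω‖ ^ 2 + t ^ 2) ≤ ‖ξ - x‖ ^ 2 + t ^ 2 := by
    intro ξ
    have htri : ‖ξ - ω‖ ≤ ‖ξ - x‖ + T * t := by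
      have h1 := dist_triangle ξ x ω
      simp only [dist_eq_norm] at h1
      linarith [hcone]
    exact aux_cone hT ht (norm_nonneg _) (norm_nonneg _) htri
  -- Step A : reduce to the kernel centered at ω
  have hae : ∀ᵐ ξ ∂μ, ξ ∈ closedBall (0 : EuclideanSpace ℝ (Fin k)) R :=
    mem_ae_iff.mpr hsupp
  have stepA : (∫⁻ ξ, g ξ *
        ENNReal.ofReal ((t * (1 + ‖ξ‖ ^ 2) / (‖ξ - x‖ ^ 2 + t ^ 2)) ^ δ) ∂μ)
      ≤ ENNReal.ofReal Cα *
        ∫⁻ ξ, g ξ * ENNReal.ofReal ((t / (‖ξ - ω‖ ^ 2 + t ^ 2)) ^ δ) ∂μ := by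
    rw [← lintegral_const_mul _ (f := fun ξ => g ξ * ENNReal.ofReal ((t / (‖ξ - ω‖ ^ 2 + t ^ 2)) ^ δ)) (hg.mul hK'm)]
    refine lintegral_mono_ae ?_
    filter_upwards [hae] with ξ hξ
    have hξR : ‖ξ‖ ≤ R := mem_closedBall_zero_iff.mp hξ
    rw [mul_left_comm]
    refine mul_le_mul_right ?_ _
    rw [← ENNReal.ofReal_mul hCα.le]
    apply ENNReal.ofReal_le_ofReal
    rw [hCαdef, ← Real.mul_rpow (by positivity) (by positivity)]
    apply Real.rpow_le_rpow (by positivity) ?_ hδ.le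
    rw [div_mul_div_comm]
    have hD : 0 < c₁ * (‖ξ - ω‖ ^ 2 + t ^ 2) := by positivity
    refine div_le_div₀ (by positivity) ?_ hD (hgeo ξ)
    nlinarith [pow_le_pow_left₀ (norm_nonneg ξ) hξR 2, ht.le]
  -- Step B : estimate the ω-centered integral by the HL maximal function
  set b : ℕ → ℝ := fun j => (4 / 4 ^ j / t) ^ δ with hbdef
  set Bset : ℕ → Set (EuclideanSpace ℝ (Fin k)) := fun j => ball ω (2 ^ j * t) with hBdef
  have hpt : ∀ ξ, g ξ * ENNReal.ofReal ((t / (‖ξ - ω‖ ^ 2 + t ^ 2)) ^ δ)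
      ≤ ∑' j : ℕ, (Bset j).indicator (fun y => ENNReal.ofReal (b j) * g y) ξ := by
    intro ξ
    obtain ⟨j, hj, hb⟩ := aux_dyadic ht (‖ξ - ω‖) (norm_nonneg _)
    have hKb : ENNReal.ofReal ((t / (‖ξ - ω‖ ^ 2 + t ^ 2)) ^ δ) ≤ ENNReal.ofReal (b j) :=
      ENNReal.ofReal_le_ofReal (Real.rpow_le_rpow (by positivity) hb hδ.le)
    calc g ξ * ENNReal.ofReal ((t / (‖ξ - ω‖ ^ 2 + t ^ 2)) ^ δ)
        ≤ g ξ * ENNReal.ofReal (b j) := mul_le_mul_right hKb _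
      _ = (Bset j).indicator (fun y => ENNReal.ofReal (b j) * g y) ξ := by
          rw [Set.indicator_of_mem (by simpa [hBdef, mem_ball, dist_eq_norm] using hj)]
          ring
      _ ≤ ∑' i : ℕ, (Bset i).indicator (fun y => ENNReal.ofReal (b i) * g y) ξ :=
          ENNReal.le_tsum j
  have hterm : ∀ j : ℕ, ENNReal.ofReal (b j) * ∫⁻ ξ in Bset j, g ξ ∂μ
      ≤ ENNReal.ofReal (c₀ * 4 ^ δ) * ENNReal.ofReal r0 ^ j * N := by
    intro j
    have hrj : (0 : ℝ) < 2 ^ j * t := by positivity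
    have hIle : (∫⁻ ξ in Bset j, g ξ ∂μ)
        ≤ μ (Bset j) * ((μ (Bset j))⁻¹ * ∫⁻ ξ in Bset j, g ξ ∂μ) :=
      aux_le_mul_inv (measure_ne_top μ _) fun h => setLIntegral_measure_zero _ _ h
    have hNle : (μ (Bset j))⁻¹ * ∫⁻ ξ in Bset j, g ξ ∂μ ≤ N := by
      rw [hNdef]
      exact le_iSup₂ (f := fun r (_ : 0 < r) =>
        (μ (ball ω r))⁻¹ * ∫⁻ ξ in ball ω r, g ξ ∂μ) (2 ^ j * t) hrj
    have hμj : μ (Bset j) ≤ ENNReal.ofReal (c₀ * (2 ^ j * t) ^ δ) := hgrowth ω _ hrj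
    have hcalc : b j * (c₀ * ((2 : ℝ) ^ j * t) ^ δ) = c₀ * 4 ^ δ * r0 ^ j := by
      rw [hbdef, hr0def]
      exact aux_calc ht hc₀.le j
    calc ENNReal.ofReal (b j) * ∫⁻ ξ in Bset j, g ξ ∂μ
        ≤ ENNReal.ofReal (b j) * (μ (Bset j) * ((μ (Bset j))⁻¹ * ∫⁻ ξ in Bset j, g ξ ∂μ)) :=
          mul_le_mul_right hIle _
      _ = (ENNReal.ofReal (b j) * μ (Bset j)) * ((μ (Bset j))⁻¹ * ∫⁻ ξ in Bset j, g ξ ∂μ) :=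
          (mul_assoc _ _ _).symm
      _ ≤ (ENNReal.ofReal (b j) * ENNReal.ofReal (c₀ * (2 ^ j * t) ^ δ)) * N :=
          mul_le_mul' (mul_le_mul_right hμj _) hNle
      _ = ENNReal.ofReal (c₀ * 4 ^ δ) * ENNReal.ofReal r0 ^ j * N := by
          rw [← ENNReal.ofReal_mul (by positivity), hcalc,
            ENNReal.ofReal_mul (by positivity), ENNReal.ofReal_pow hr0.le]
  have stepB : (∫⁻ ξ, g ξ * ENNReal.ofReal ((t / (‖ξ - ω‖ ^ 2 + t ^ 2)) ^ δ) ∂μ)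
      ≤ S * N := by
    calc (∫⁻ ξ, g ξ * ENNReal.ofReal ((t / (‖ξ - ω‖ ^ 2 + t ^ 2)) ^ δ) ∂μ)
        ≤ ∫⁻ ξ, ∑' j : ℕ, (Bset j).indicator (fun y => ENNReal.ofReal (b j) * g y) ξ ∂μ :=
          lintegral_mono hpt
      _ = ∑' j : ℕ, ∫⁻ ξ, (Bset j).indicator (fun y => ENNReal.ofReal (b j) * g y) ξ ∂μ :=
          lintegral_tsum fun j =>
            ((measurable_const.mul hg).indicator measurableSet_ball).aemeasurable
      _ = ∑' j : ℕ, ENNReal.ofReal (b j) * ∫⁻ ξ in Bset j, g ξ ∂μ := by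
          refine tsum_congr fun j => ?_
          rw [lintegral_indicator measurableSet_ball, lintegral_const_mul _ hg]
      _ ≤ ∑' j : ℕ, ENNReal.ofReal (c₀ * 4 ^ δ) * ENNReal.ofReal r0 ^ j * N :=
          ENNReal.tsum_le_tsum hterm
      _ = S * N := by
          rw [hSdef]
          rw [ENNReal.tsum_mul_right, ENNReal.tsum_mul_left, ENNReal.tsum_geometric]
    done
  calc (∫⁻ ξ, g ξ *
        ENNReal.ofReal ((t * (1 + ‖ξ‖ ^ 2) / (‖ξ - x‖ ^ 2 + t ^ 2)) ^ δ) ∂μ)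
      ≤ ENNReal.ofReal Cα *
        ∫⁻ ξ, g ξ * ENNReal.ofReal ((t / (‖ξ - ω‖ ^ 2 + t ^ 2)) ^ δ) ∂μ := stepA
    _ ≤ ENNReal.ofReal Cα * (S * N) := mul_le_mul_right stepB _
    _ = ENNReal.ofReal Cα * S * N := (mul_assoc _ _ _).symm
end

section
/- Let Γ < Isom(ℍᵏ) be a non-elementary discrete group with Patterson–Sullivan measures {μ_x}, each of mass 1 on orbit points. For each f ∈ L¹(∂ℍᵏ, μ_O) there exists a μ_O-null set Z such that for every ω in the conical limit set outside Z and every sequence γ_i ∈ Γ with γ_iO converging conically to ω, one has ∫_{∂ℍᵏ} f(θ) dμ_{γ_iO}(θ) → f(ω). -/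
open MeasureTheory Metric Filter Topology
open scoped ENNReal

section Aux

private lemma aux_sq_bound (u v t a : ℝ) (hu : 0 ≤ u) (ht : 0 ≤ t) (ha : 0 ≤ a)
    (h : u ≤ v + a * t) : u ^ 2 + t ^ 2 ≤ (4 + 4 * a ^ 2) * (v ^ 2 + t ^ 2) := by
  nlinarith [sq_nonneg (v - a * t), sq_nonneg v, sq_nonneg t, sq_nonneg a, sq_nonneg (a * t),
    sq_nonneg (v + a * t), mul_nonneg (mul_nonneg ha ha) (mul_nonneg ht ht)]

private lemma aux_num_bound (u v w : ℝ) (hu : 0 ≤ u) (h : u ≤ v + w) :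
    1 + u ^ 2 ≤ 2 * (1 + w ^ 2) * (1 + v ^ 2) := by
  nlinarith [sq_nonneg (v - w), sq_nonneg (v * w), sq_nonneg v, sq_nonneg w]

private lemma aux_base_le (t A c N1 N2 d1 d2 : ℝ) (ht : 0 ≤ t) (hA : 0 ≤ A) (hc : 0 ≤ c)
    (hN2 : 0 ≤ N2) (hd1 : 0 < d1) (hd2 : 0 < d2)
    (hN : N1 ≤ A * N2) (hd : d2 ≤ c * d1) :
    t * N1 / d1 ≤ A * c * (t * N2 / d2) := by
  rw [← mul_div_assoc, div_le_div_iff₀ hd1 hd2]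
  have h1 : t * d2 * N1 ≤ t * d2 * (A * N2) :=
    mul_le_mul_of_nonneg_left hN (mul_nonneg ht hd2.le)
  have h2 : t * (A * N2) * d2 ≤ t * (A * N2) * (c * d1) :=
    mul_le_mul_of_nonneg_left hd (by positivity)
  nlinarith [h1, h2]

private lemma kernel_compare {E : Type*} [NormedAddCommGroup E] {δ t a : ℝ} (hδ : 0 < δ)
    (ht : 0 < t) (ha : 0 ≤ a) (x ω : E) (hx : ‖x - ω‖ ≤ a * t) (ξ : E) :
    (t * (1 + ‖ξ‖ ^ 2) / (‖ξ - x‖ ^ 2 + t ^ 2)) ^ δ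
        ≤ (2 * (1 + ‖ω‖ ^ 2) * (4 + 4 * a ^ 2)) ^ δ *
          (t * (1 + ‖ξ - ω‖ ^ 2) / (‖ξ - ω‖ ^ 2 + t ^ 2)) ^ δ
    ∧ (t * (1 + ‖ξ - ω‖ ^ 2) / (‖ξ - ω‖ ^ 2 + t ^ 2)) ^ δ
        ≤ (2 * (1 + ‖ω‖ ^ 2) * (4 + 4 * a ^ 2)) ^ δ *
          (t * (1 + ‖ξ‖ ^ 2) / (‖ξ - x‖ ^ 2 + t ^ 2)) ^ δ := by
  have hd1 : 0 < ‖ξ - x‖ ^ 2 + t ^ 2 := by positivity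
  have hd2 : 0 < ‖ξ - ω‖ ^ 2 + t ^ 2 := by positivity
  have hA : (0:ℝ) ≤ 2 * (1 + ‖ω‖ ^ 2) := by positivity
  have hc : (0:ℝ) ≤ 4 + 4 * a ^ 2 := by positivity
  constructor
  · have hnum : 1 + ‖ξ‖ ^ 2 ≤ 2 * (1 + ‖ω‖ ^ 2) * (1 + ‖ξ - ω‖ ^ 2) := by
      refine aux_num_bound _ _ _ (norm_nonneg _) ?_
      simpa using norm_add_le (ξ - ω) ω
    have hden : ‖ξ - ω‖ ^ 2 + t ^ 2 ≤ (4 + 4 * a ^ 2) * (‖ξ - x‖ ^ 2 + t ^ 2) := by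
      refine aux_sq_bound _ _ _ _ (norm_nonneg _) ht.le ha ?_
      have h1 : ‖ξ - ω‖ ≤ ‖ξ - x‖ + ‖x - ω‖ := by
        simpa using norm_add_le (ξ - x) (x - ω)
      linarith
    have hbase := aux_base_le t _ _ _ _ _ _ ht.le hA hc (by positivity) hd1 hd2 hnum hden
    calc (t * (1 + ‖ξ‖ ^ 2) / (‖ξ - x‖ ^ 2 + t ^ 2)) ^ δ
        ≤ (2 * (1 + ‖ω‖ ^ 2) * (4 + 4 * a ^ 2) *
            (t * (1 + ‖ξ - ω‖ ^ 2) / (‖ξ - ω‖ ^ 2 + t ^ 2))) ^ δ :=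
          Real.rpow_le_rpow (by positivity) hbase hδ.le
      _ = _ := Real.mul_rpow (by positivity) (by positivity)
  · have hnum : 1 + ‖ξ - ω‖ ^ 2 ≤ 2 * (1 + ‖ω‖ ^ 2) * (1 + ‖ξ‖ ^ 2) := by
      refine aux_num_bound _ _ _ (norm_nonneg _) (norm_sub_le _ _)
    have hden : ‖ξ - x‖ ^ 2 + t ^ 2 ≤ (4 + 4 * a ^ 2) * (‖ξ - ω‖ ^ 2 + t ^ 2) := by
      refine aux_sq_bound _ _ _ _ (norm_nonneg _) ht.le ha ?_
      have h1 : ‖ξ - x‖ ≤ ‖ξ - ω‖ + ‖ω - x‖ := by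
        simpa using norm_add_le (ξ - ω) (ω - x)
      have h2 : ‖ω - x‖ = ‖x - ω‖ := norm_sub_rev _ _
      linarith
    have hbase := aux_base_le t _ _ _ _ _ _ ht.le hA hc (by positivity) hd2 hd1 hnum hden
    calc (t * (1 + ‖ξ - ω‖ ^ 2) / (‖ξ - ω‖ ^ 2 + t ^ 2)) ^ δ
        ≤ (2 * (1 + ‖ω‖ ^ 2) * (4 + 4 * a ^ 2) *
            (t * (1 + ‖ξ‖ ^ 2) / (‖ξ - x‖ ^ 2 + t ^ 2))) ^ δ :=
          Real.rpow_le_rpow (by positivity) hbase hδ.le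
      _ = _ := Real.mul_rpow (by positivity) (by positivity)

private lemma kernel_antitone {δ t : ℝ} (hδ : 0 < δ) (ht : 0 < t) (ht1 : t ≤ 1) :
    AntitoneOn (fun r : ℝ => (t * (1 + r ^ 2) / (r ^ 2 + t ^ 2)) ^ δ) (Set.Ici 0) := by
  intro r hr s hs hrs
  simp only [Set.mem_Ici] at hr hs
  have hdr : 0 < r ^ 2 + t ^ 2 := by positivity
  have hds : 0 < s ^ 2 + t ^ 2 := by positivity
  refine Real.rpow_le_rpow (by positivity) ?_ hδ.le
  rw [div_le_div_iff₀ hds hdr]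
  have h1 : r ^ 2 ≤ s ^ 2 := by nlinarith
  have h2 : t ^ 2 ≤ 1 := by nlinarith
  nlinarith [mul_nonneg (mul_nonneg ht.le (sub_nonneg.2 h1)) (sub_nonneg.2 h2)]

private lemma kernel_continuous {δ t : ℝ} (hδ : 0 ≤ δ) (ht : 0 < t) :
    Continuous fun r : ℝ => (t * (1 + r ^ 2) / (r ^ 2 + t ^ 2)) ^ δ := by
  refine Continuous.rpow_const ?_ fun r => Or.inr hδ
  exact Continuous.div (by fun_prop) (by fun_prop) fun r => by positivity

private lemma dens_le_const {E : Type*} [NormedAddCommGroup E] {δ t : ℝ} (hδ : 0 < δ)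
    (ht : 0 < t) (x ξ : E) :
    (t * (1 + ‖ξ‖ ^ 2) / (‖ξ - x‖ ^ 2 + t ^ 2)) ^ δ
      ≤ ((1 + 2 * ‖x‖ ^ 2) / t + 2 * t) ^ δ := by
  have hd1 : 0 < ‖ξ - x‖ ^ 2 + t ^ 2 := by positivity
  refine Real.rpow_le_rpow (by positivity) ?_ hδ.le
  rw [div_le_iff₀ hd1]
  have hu : ‖ξ‖ ≤ ‖x‖ + ‖ξ - x‖ := by
    simpa using norm_add_le x (ξ - x)
  have hu2 : ‖ξ‖ ^ 2 ≤ 2 * ‖x‖ ^ 2 + 2 * ‖ξ - x‖ ^ 2 := by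
    nlinarith [sq_nonneg (‖x‖ - ‖ξ - x‖), norm_nonneg ξ, norm_nonneg x, norm_nonneg (ξ - x)]
  have hq : (1 + 2 * ‖x‖ ^ 2) / t * t = 1 + 2 * ‖x‖ ^ 2 := div_mul_cancel₀ _ ht.ne'
  have hq2 : (1 + 2 * ‖x‖ ^ 2) / t * t ^ 2 = (1 + 2 * ‖x‖ ^ 2) * t := by
    field_simp
  have hqn : 0 ≤ (1 + 2 * ‖x‖ ^ 2) / t := by positivity
  nlinarith [hq2, mul_nonneg hqn (sq_nonneg ‖ξ - x‖),
    mul_le_mul_of_nonneg_left hu2 ht.le, pow_pos ht 3]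

private lemma far_bound {E : Type*} [NormedAddCommGroup E] {δ t a R : ℝ} (hδ : 0 < δ)
    (ht : 0 < t) (ha : 0 < a) (hR : 0 < R) (x ω ξ : E) (hx : ‖x - ω‖ ≤ a * t)
    (hat : a * t ≤ R / 2) (hat1 : a * t ≤ 1) (hξ : R ≤ ‖ξ - ω‖) :
    (t * (1 + ‖ξ‖ ^ 2) / (‖ξ - x‖ ^ 2 + t ^ 2)) ^ δ
      ≤ ((4 * (1 + 2 * (‖ω‖ + 1) ^ 2) / R ^ 2 + 2) * t) ^ δ := by
  have hd1 : 0 < ‖ξ - x‖ ^ 2 + t ^ 2 := by positivity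
  refine Real.rpow_le_rpow (by positivity) ?_ hδ.le
  rw [div_le_iff₀ hd1]
  have hvx : R / 2 ≤ ‖ξ - x‖ := by
    have h1 : ‖ξ - ω‖ ≤ ‖ξ - x‖ + ‖x - ω‖ := by
      simpa using norm_add_le (ξ - x) (x - ω)
    linarith
  have hs : ‖x‖ ≤ ‖ω‖ + 1 := by
    have h1 : ‖x‖ ≤ ‖x - ω‖ + ‖ω‖ := by
      simpa using norm_add_le (x - ω) ω
    linarith
  have hu : ‖ξ‖ ≤ ‖x‖ + ‖ξ - x‖ := by
    simpa using norm_add_le x (ξ - x)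
  have hu2 : ‖ξ‖ ^ 2 ≤ 2 * (‖ω‖ + 1) ^ 2 + 2 * ‖ξ - x‖ ^ 2 := by
    have hu' : ‖ξ‖ ≤ (‖ω‖ + 1) + ‖ξ - x‖ := by linarith
    nlinarith [sq_nonneg ((‖ω‖ + 1) - ‖ξ - x‖), norm_nonneg ξ, norm_nonneg (ξ - x),
      norm_nonneg ω]
  have hq : 0 ≤ 4 * (1 + 2 * (‖ω‖ + 1) ^ 2) / R ^ 2 := by positivity
  have hkey : 1 + 2 * (‖ω‖ + 1) ^ 2 ≤ 4 * (1 + 2 * (‖ω‖ + 1) ^ 2) / R ^ 2 * ‖ξ - x‖ ^ 2 := by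
    rw [div_mul_eq_mul_div, le_div_iff₀ (by positivity)]
    have hv2 : (R / 2) ^ 2 ≤ ‖ξ - x‖ ^ 2 := by nlinarith [hvx, hR]
    nlinarith [mul_le_mul_of_nonneg_left hv2 (by positivity : (0:ℝ) ≤ 1 + 2 * (‖ω‖ + 1) ^ 2)]
  nlinarith [mul_le_mul_of_nonneg_left hkey ht.le, mul_le_mul_of_nonneg_left hu2 ht.le,
    mul_nonneg hq (pow_nonneg ht.le 3), pow_pos ht 3,
    mul_nonneg (mul_nonneg hq ht.le) (sq_nonneg t)]

private lemma layercake_ball {E : Type*} [NormedAddCommGroup E] [MeasurableSpace E]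
    [BorelSpace E] (μ : Measure E) (ω : E) {R : ℝ}
    (K : ℝ → ℝ) (hKc : Continuous K) (hK0 : ∀ r, 0 ≤ K r) (hKa : AntitoneOn K (Set.Ici 0))
    (g : E → ℝ≥0∞) (hg : Measurable g) (ε : ℝ≥0∞) (hε : ε ≠ ⊤)
    (hball : ∀ r, 0 ≤ r → r ≤ R → ∫⁻ ξ in closedBall ω r, g ξ ∂μ ≤ ε * μ (closedBall ω r)) :
    ∫⁻ ξ in closedBall ω R, g ξ * ENNReal.ofReal (K ‖ξ - ω‖) ∂μ
      ≤ ε * ∫⁻ ξ, ENNReal.ofReal (K ‖ξ - ω‖) ∂μ := by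
  have hKm : Measurable fun ξ : E => K ‖ξ - ω‖ :=
    (hKc.comp ((continuous_id.sub continuous_const).norm)).measurable
  set ν : Measure E := (μ.restrict (closedBall ω R)).withDensity g with hν
  have hL : ∫⁻ ξ in closedBall ω R, g ξ * ENNReal.ofReal (K ‖ξ - ω‖) ∂μ
      = ∫⁻ ξ, ENNReal.ofReal (K ‖ξ - ω‖) ∂ν := by
    rw [hν, lintegral_withDensity_eq_lintegral_mul _ hg hKm.ennreal_ofReal]
    simp only [Pi.mul_apply]
  have claim : ∀ s : ℝ, ν {ξ | s < K ‖ξ - ω‖} ≤ ε * μ {ξ | s ≤ K ‖ξ - ω‖} := by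
    intro s
    have hTm : MeasurableSet {ξ : E | s < K ‖ξ - ω‖} := measurableSet_lt measurable_const hKm
    have hνT : ν {ξ | s < K ‖ξ - ω‖}
        = ∫⁻ ξ in {ξ | s < K ‖ξ - ω‖} ∩ closedBall ω R, g ξ ∂μ := by
      rw [hν, withDensity_apply _ hTm, Measure.restrict_restrict hTm]
    by_cases hS : ∃ r : ℝ, (0 ≤ r ∧ r ≤ R) ∧ s < K r
    · obtain ⟨r₀, hr₀⟩ := hS
      set ρ := sSup {r : ℝ | (0 ≤ r ∧ r ≤ R) ∧ s < K r} with hρ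
      have hbdd : BddAbove {r : ℝ | (0 ≤ r ∧ r ≤ R) ∧ s < K r} := ⟨R, fun r hr => hr.1.2⟩
      have hne : {r : ℝ | (0 ≤ r ∧ r ≤ R) ∧ s < K r}.Nonempty := ⟨r₀, hr₀⟩
      have hρ0 : 0 ≤ ρ := hr₀.1.1.trans (le_csSup hbdd hr₀)
      have hρR : ρ ≤ R := csSup_le hne fun r hr => hr.1.2
      have hKρ : s ≤ K ρ := by
        have h1 : ρ ∈ closure {r : ℝ | (0 ≤ r ∧ r ≤ R) ∧ s < K r} :=
          csSup_mem_closure hne hbdd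
        have h2 : closure {r : ℝ | (0 ≤ r ∧ r ≤ R) ∧ s < K r} ⊆ {r | s ≤ K r} :=
          closure_minimal (fun r hr => hr.2.le) (isClosed_le continuous_const hKc)
        exact h2 h1
      have hsub : {ξ : E | s < K ‖ξ - ω‖} ∩ closedBall ω R ⊆ closedBall ω ρ := by
        rintro ξ ⟨h1, h2⟩
        rw [mem_closedBall, dist_eq_norm]
        rw [mem_closedBall, dist_eq_norm] at h2
        exact le_csSup hbdd ⟨⟨norm_nonneg _, h2⟩, h1⟩
      have hsub2 : closedBall ω ρ ⊆ {ξ : E | s ≤ K ‖ξ - ω‖} := by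
        intro ξ hξ
        rw [mem_closedBall, dist_eq_norm] at hξ
        exact hKρ.trans (hKa (Set.mem_Ici.2 (norm_nonneg _)) (Set.mem_Ici.2 hρ0) hξ)
      calc ν {ξ | s < K ‖ξ - ω‖}
          = ∫⁻ ξ in {ξ | s < K ‖ξ - ω‖} ∩ closedBall ω R, g ξ ∂μ := hνT
        _ ≤ ∫⁻ ξ in closedBall ω ρ, g ξ ∂μ := lintegral_mono_set hsub
        _ ≤ ε * μ (closedBall ω ρ) := hball ρ hρ0 hρR
        _ ≤ ε * μ {ξ | s ≤ K ‖ξ - ω‖} := mul_le_mul_right (measure_mono hsub2) ε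
    · have hempty : {ξ : E | s < K ‖ξ - ω‖} ∩ closedBall ω R = ∅ := by
        ext ξ
        simp only [Set.mem_inter_iff, Set.mem_setOf_eq, Set.mem_empty_iff_false, iff_false,
          not_and]
        intro h1 h2
        rw [mem_closedBall, dist_eq_norm] at h2
        exact hS ⟨‖ξ - ω‖, ⟨norm_nonneg _, h2⟩, h1⟩
      rw [hνT, hempty]
      simp
  rw [hL, lintegral_eq_lintegral_meas_lt ν (Eventually.of_forall fun ξ => hK0 _)
      hKm.aemeasurable,
    lintegral_eq_lintegral_meas_le μ (Eventually.of_forall fun ξ => hK0 _) hKm.aemeasurable,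
    ← lintegral_const_mul' _ _ hε]
  exact lintegral_mono fun s => claim s

end Aux

set_option maxHeartbeats 1600000 in
/-- Almost-everywhere convergence along cones: work in the half-space model, where the
boundary of `ℍᵏ` is `E = ℝ^{k-1}`, the orbit `Γ·O` consists of points `(x', x_k)` with
`x_k > 0`, and the Patterson–Sullivan measures on orbit points have densities
`dμ_{γO}(ξ) = (x_k (1+|ξ|²)/(|ξ-x'|²+x_k²))^δ dμ_O(ξ)`, each of total mass `1`.  For
each `f ∈ L¹(μ_O)` there is a `μ_O`-null set `Z` such that for every `ω ∉ Z` and every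
sequence of orbit points converging to `ω` conically (i.e. inside a vertical cone
`C_ω(α)`, `α < π/2`), the integrals `∫ f dμ_{γᵢO}` converge to `f ω`. -/
theorem ae_convergence_along_cones
    (k : ℕ) (δ : ℝ) (hδ : 0 < δ)
    (μ : Measure (EuclideanSpace ℝ (Fin k))) [IsFiniteMeasure μ]
    (orbit : Set (EuclideanSpace ℝ (Fin k) × ℝ))
    (hpos : ∀ p ∈ orbit, 0 < p.2)
    (dens : EuclideanSpace ℝ (Fin k) × ℝ → EuclideanSpace ℝ (Fin k) → ℝ)
    (hdens : ∀ p ξ, dens p ξ = (p.2 * (1 + ‖ξ‖ ^ 2) / (‖ξ - p.1‖ ^ 2 + p.2 ^ 2)) ^ δ)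
    -- `‖μ_x‖ = 1` for all orbit points
    (hmass : ∀ p ∈ orbit, ∫ ξ, dens p ξ ∂μ = 1)
    (f : EuclideanSpace ℝ (Fin k) → ℝ) (hf : Integrable f μ) :
    ∃ Z : Set (EuclideanSpace ℝ (Fin k)), μ Z = 0 ∧
      ∀ ω : EuclideanSpace ℝ (Fin k), ω ∉ Z →
        ∀ p : ℕ → EuclideanSpace ℝ (Fin k) × ℝ, (∀ i, p i ∈ orbit) →
          -- conical convergence of the orbit sequence to ω:
          (∃ α ∈ Set.Ioo 0 (Real.pi / 2), ∀ i, ‖(p i).1 - ω‖ ≤ Real.tan α * (p i).2) →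
          Tendsto (fun i => ‖(p i).1 - ω‖ ^ 2 + (p i).2 ^ 2) atTop (𝓝 0) →
          Tendsto (fun i => ∫ ξ, f ξ * dens (p i) ξ ∂μ) atTop (𝓝 (f ω)) := by
  obtain ⟨f', hf'sm, hff'⟩ : ∃ f', StronglyMeasurable f' ∧ f =ᵐ[μ] f' :=
    ⟨hf.1.mk f, hf.1.stronglyMeasurable_mk, hf.1.ae_eq_mk⟩
  have hf' : Integrable f' μ := hf.congr hff'
  have hLeb : ∀ᵐ ω ∂μ,
      Tendsto (fun r => ⨍ ξ in closedBall ω r, ‖f' ξ - f' ω‖ ∂μ) (𝓝[>] 0) (𝓝 0) := by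
    filter_upwards [(Besicovitch.vitaliFamily μ).ae_tendsto_average_norm_sub
      hf'.locallyIntegrable] with ω hω
    exact hω.comp (Besicovitch.tendsto_filterAt μ ω)
  refine ⟨{ω | ¬ Tendsto (fun r => ⨍ ξ in closedBall ω r, ‖f' ξ - f' ω‖ ∂μ) (𝓝[>] 0) (𝓝 0)}
      ∪ {ω | f ω ≠ f' ω}, measure_union_null (ae_iff.mp hLeb) (ae_iff.mp hff'), ?_⟩
  rintro ω hω p hporb ⟨α, hα, hcone⟩ htend
  rw [Set.mem_union, not_or] at hω
  obtain ⟨h1, h2⟩ := hω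
  rw [Set.mem_setOf_eq, not_not] at h1
  rw [Set.mem_setOf_eq, not_ne_iff] at h2
  set a := Real.tan α with ha_def
  have ha : 0 < a := Real.tan_pos_of_pos_of_lt_pi_div_two hα.1 hα.2
  have hIeq : ∀ i, ∫ ξ, f ξ * dens (p i) ξ ∂μ = ∫ ξ, f' ξ * dens (p i) ξ ∂μ := fun i =>
    integral_congr_ae (hff'.mul EventuallyEq.rfl)
  have htp : ∀ i, 0 < (p i).2 := fun i => hpos _ (hporb i)
  -- continuity, nonnegativity, boundedness, integrability of the densities
  have hdc : ∀ i, Continuous (dens (p i)) := by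
    intro i
    have h : Continuous fun ξ : EuclideanSpace ℝ (Fin k) =>
        ((p i).2 * (1 + ‖ξ‖ ^ 2) / (‖ξ - (p i).1‖ ^ 2 + (p i).2 ^ 2)) ^ δ := by
      refine Continuous.rpow_const ?_ fun ξ => Or.inr hδ.le
      refine Continuous.div (by fun_prop) (by fun_prop) fun ξ => ?_
      exact (add_pos_of_nonneg_of_pos (sq_nonneg _) (pow_pos (htp i) 2)).ne'
    exact h.congr fun ξ => (hdens (p i) ξ).symm
  have hdnn : ∀ i ξ, 0 ≤ dens (p i) ξ := by
    intro i ξ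
    rw [hdens]
    exact Real.rpow_nonneg
      (div_nonneg (mul_nonneg (htp i).le (by positivity)) (by positivity)) _
  have hdB : ∀ i ξ, dens (p i) ξ ≤ ((1 + 2 * ‖(p i).1‖ ^ 2) / (p i).2 + 2 * (p i).2) ^ δ := by
    intro i ξ
    rw [hdens]
    exact dens_le_const hδ (htp i) _ _
  have hdint : ∀ i, Integrable (dens (p i)) μ := fun i =>
    (integrable_const (((1 + 2 * ‖(p i).1‖ ^ 2) / (p i).2 + 2 * (p i).2) ^ δ)).mono'
      (hdc i).aestronglyMeasurable
      (Eventually.of_forall fun ξ => by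
        rw [Real.norm_eq_abs, abs_of_nonneg (hdnn i ξ)]; exact hdB i ξ)
  have hfdint : ∀ (c : ℝ) (i), Integrable (fun ξ => (f' ξ - c) * dens (p i) ξ) μ := by
    intro c i
    have hb : Integrable (fun ξ => dens (p i) ξ * (f' ξ - c)) μ :=
      (hf'.sub (integrable_const c)).bdd_mul (hdc i).aestronglyMeasurable
        (c := ((1 + 2 * ‖(p i).1‖ ^ 2) / (p i).2 + 2 * (p i).2) ^ δ) (Eventually.of_forall fun ξ => by
          rw [Real.norm_eq_abs, abs_of_nonneg (hdnn i ξ)]; exact hdB i ξ)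
    exact hb.congr (Eventually.of_forall fun ξ => mul_comm _ _)
  have hf'd : ∀ i, Integrable (fun ξ => f' ξ * dens (p i) ξ) μ := by
    intro i
    have hb : Integrable (fun ξ => dens (p i) ξ * f' ξ) μ :=
      hf'.bdd_mul (hdc i).aestronglyMeasurable
        (c := ((1 + 2 * ‖(p i).1‖ ^ 2) / (p i).2 + 2 * (p i).2) ^ δ) (Eventually.of_forall fun ξ => by
          rw [Real.norm_eq_abs, abs_of_nonneg (hdnn i ξ)]; exact hdB i ξ)
    exact hb.congr (Eventually.of_forall fun ξ => mul_comm _ _)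
  -- the heights tend to zero
  have htt : Tendsto (fun i => (p i).2) atTop (𝓝 0) := by
    have hsq : Tendsto (fun i => Real.sqrt (‖(p i).1 - ω‖ ^ 2 + (p i).2 ^ 2)) atTop (𝓝 0) := by
      have h := (Real.continuous_sqrt.tendsto 0).comp htend
      simpa [Function.comp_def] using h
    refine squeeze_zero (fun i => (htp i).le) (fun i => ?_) hsq
    have hle : (p i).2 ^ 2 ≤ ‖(p i).1 - ω‖ ^ 2 + (p i).2 ^ 2 := by
      nlinarith [sq_nonneg ‖(p i).1 - ω‖]
    calc (p i).2 = Real.sqrt ((p i).2 ^ 2) := (Real.sqrt_sq (htp i).le).symm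
      _ ≤ _ := Real.sqrt_le_sqrt hle
  -- notation for the L¹ data
  set g : EuclideanSpace ℝ (Fin k) → ℝ := fun ξ => ‖f' ξ - f' ω‖ with hgdef
  have hgint : Integrable g μ := (hf'.sub (integrable_const (f' ω))).norm
  set G : EuclideanSpace ℝ (Fin k) → ℝ≥0∞ := fun ξ => ENNReal.ofReal (g ξ) with hGdef
  have hGmeas : Measurable G :=
    ((hf'sm.measurable.sub measurable_const).norm).ennreal_ofReal
  have hGeq : ∫⁻ ξ, G ξ ∂μ = ENNReal.ofReal (∫ ξ, g ξ ∂μ) :=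
    (ofReal_integral_eq_lintegral_ofReal hgint
      (Eventually.of_forall fun ξ => norm_nonneg _)).symm
  have hMgne : ∫⁻ ξ, G ξ ∂μ ≠ ⊤ := by rw [hGeq]; exact ENNReal.ofReal_ne_top
  set L : ℕ → ℝ≥0∞ := fun i => ∫⁻ ξ, G ξ * ENNReal.ofReal (dens (p i) ξ) ∂μ with hLdef
  -- the main quantitative estimate
  have key : ∀ ε : ℝ, 0 < ε → ∀ᶠ i in atTop, L i ≤ ENNReal.ofReal ε := by
    intro ε hε
    set C : ℝ := (2 * (1 + ‖ω‖ ^ 2) * (4 + 4 * a ^ 2)) ^ δ with hCdef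
    have hCpos : 0 < C := Real.rpow_pos_of_pos (by positivity) _
    set Mr : ℝ := (∫⁻ ξ, G ξ ∂μ).toReal with hMrdef
    have hMrnn : 0 ≤ Mr := ENNReal.toReal_nonneg
    set ε' : ℝ := ε / (2 * (C ^ 2 + 1)) with hε'def
    have hε'pos : 0 < ε' := by positivity
    -- choose a good radius from the Lebesgue point property
    obtain ⟨R, hRpos, hRprop⟩ : ∃ R, 0 < R ∧ ∀ r, 0 < r → r ≤ R →
        (⨍ ξ in closedBall ω r, ‖f' ξ - f' ω‖ ∂μ) ≤ ε' := by
      have h1 : ∀ᶠ r in 𝓝[>] (0:ℝ),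
          (⨍ ξ in closedBall ω r, ‖f' ξ - f' ω‖ ∂μ) ≤ ε' :=
        h1.eventually_le_const hε'pos
      rcases mem_nhdsGT_iff_exists_Ioc_subset.mp h1 with ⟨R, hR, hprop⟩
      exact ⟨R, hR, fun r hr1 hr2 => hprop ⟨hr1, hr2⟩⟩
    have hball : ∀ r, 0 ≤ r → r ≤ R →
        ∫⁻ ξ in closedBall ω r, G ξ ∂μ ≤ ENNReal.ofReal ε' * μ (closedBall ω r) := by
      intro r hr0 hrR
      rcases eq_or_lt_of_le hr0 with hr | hr
      · have hz : ∫⁻ ξ in closedBall ω (0:ℝ), G ξ ∂μ = 0 := by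
          rw [closedBall_zero]
          have he : ∫⁻ ξ in ({ω} : Set (EuclideanSpace ℝ (Fin k))), G ξ ∂μ
              = ∫⁻ ξ in ({ω} : Set (EuclideanSpace ℝ (Fin k))), 0 ∂μ := by
            refine setLIntegral_congr_fun (measurableSet_singleton ω)
              (fun ξ hξ => ?_)
            rcases hξ with rfl
            simp [hGdef, hgdef]
          simpa using he
        rw [← hr, hz]
        exact zero_le
      · rcases eq_or_ne (μ (closedBall ω r)) 0 with hμ0 | hμ0
        · rw [Measure.restrict_eq_zero.mpr hμ0]
          simp
        · have hfin : μ (closedBall ω r) ≠ ⊤ := measure_ne_top μ _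
          have hpos' : 0 < (μ (closedBall ω r)).toReal := ENNReal.toReal_pos hμ0 hfin
          have havg := hRprop r hr hrR
          rw [setAverage_eq, smul_eq_mul] at havg
          have h4 := mul_le_mul_of_nonneg_left havg hpos'.le
          rw [← mul_assoc, measureReal_def, mul_inv_cancel₀ hpos'.ne', one_mul] at h4
          have h2 : ∫ ξ in closedBall ω r, g ξ ∂μ ≤ ε' * (μ (closedBall ω r)).toReal := by
            rw [hgdef]; nlinarith [h4]
          calc ∫⁻ ξ in closedBall ω r, G ξ ∂μ
              = ENNReal.ofReal (∫ ξ in closedBall ω r, g ξ ∂μ) :=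
                (ofReal_integral_eq_lintegral_ofReal hgint.integrableOn
                  (Eventually.of_forall fun ξ => norm_nonneg _)).symm
            _ ≤ ENNReal.ofReal (ε' * (μ (closedBall ω r)).toReal) :=
                ENNReal.ofReal_le_ofReal h2
            _ = ENNReal.ofReal ε' * μ (closedBall ω r) := by
                rw [ENNReal.ofReal_mul hε'pos.le, ENNReal.ofReal_toReal hfin]
    -- choice of the smallness threshold for the heights
    set Cf : ℝ := 4 * (1 + 2 * (‖ω‖ + 1) ^ 2) / R ^ 2 + 2 with hCfdef
    have hCfpos : 0 < Cf := by positivity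
    set η : ℝ := (ε / (2 * (Mr + 1))) ^ δ⁻¹ with hηdef
    have hηpos : 0 < η := Real.rpow_pos_of_pos (by positivity) _
    set t₀ : ℝ := min 1 (min (R / (2 * a)) (min (1 / a) (η / Cf))) with ht₀def
    have ht₀pos : 0 < t₀ :=
      lt_min one_pos (lt_min (by positivity) (lt_min (by positivity) (by positivity)))
    filter_upwards [htt.eventually_lt_const ht₀pos] with i hti
    have hti1 : (p i).2 ≤ 1 := hti.le.trans (min_le_left _ _)
    have htiR : a * (p i).2 ≤ R / 2 := by
      have hle : (p i).2 ≤ R / (2 * a) :=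
        hti.le.trans ((min_le_right _ _).trans (min_le_left _ _))
      have := mul_le_mul_of_nonneg_left hle ha.le
      calc a * (p i).2 ≤ a * (R / (2 * a)) := this
        _ = R / 2 := by field_simp
    have htia : a * (p i).2 ≤ 1 := by
      have hle : (p i).2 ≤ 1 / a :=
        hti.le.trans ((min_le_right _ _).trans ((min_le_right _ _).trans (min_le_left _ _)))
      have := mul_le_mul_of_nonneg_left hle ha.le
      calc a * (p i).2 ≤ a * (1 / a) := this
        _ = 1 := by field_simp
    have htiη : Cf * (p i).2 ≤ η := by
      have hle : (p i).2 ≤ η / Cf :=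
        hti.le.trans ((min_le_right _ _).trans ((min_le_right _ _).trans (min_le_right _ _)))
      have := mul_le_mul_of_nonneg_left hle hCfpos.le
      calc Cf * (p i).2 ≤ Cf * (η / Cf) := this
        _ = η := by field_simp
    -- the comparison kernel
    set t : ℝ := (p i).2 with htdef
    set x : EuclideanSpace ℝ (Fin k) := (p i).1 with hxdef
    have htpos : 0 < t := htp i
    set Kr : ℝ → ℝ := fun r => (t * (1 + r ^ 2) / (r ^ 2 + t ^ 2)) ^ δ with hKrdef
    have hKc : Continuous Kr := kernel_continuous hδ.le htpos
    have hK0 : ∀ r, 0 ≤ Kr r := fun r => Real.rpow_nonneg (by positivity) _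
    have hKa : AntitoneOn Kr (Set.Ici 0) := kernel_antitone hδ htpos hti1
    have hcmp := fun ξ => kernel_compare hδ htpos ha.le x ω (hcone i) ξ
    have hmass1 : ∫⁻ ξ, ENNReal.ofReal (dens (p i) ξ) ∂μ = 1 := by
      rw [← ofReal_integral_eq_lintegral_ofReal (hdint i)
        (Eventually.of_forall (hdnn i)), hmass _ (hporb i), ENNReal.ofReal_one]
    have hKint : ∫⁻ ξ, ENNReal.ofReal (Kr ‖ξ - ω‖) ∂μ ≤ ENNReal.ofReal C := by
      have hpt : ∀ ξ, ENNReal.ofReal (Kr ‖ξ - ω‖)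
          ≤ ENNReal.ofReal C * ENNReal.ofReal (dens (p i) ξ) := by
        intro ξ
        rw [← ENNReal.ofReal_mul hCpos.le]
        refine ENNReal.ofReal_le_ofReal ?_
        rw [hdens]
        exact (hcmp ξ).2
      calc ∫⁻ ξ, ENNReal.ofReal (Kr ‖ξ - ω‖) ∂μ
          ≤ ∫⁻ ξ, ENNReal.ofReal C * ENNReal.ofReal (dens (p i) ξ) ∂μ := lintegral_mono hpt
        _ = ENNReal.ofReal C * 1 := by
            rw [lintegral_const_mul' _ _ ENNReal.ofReal_ne_top, hmass1]
        _ = ENNReal.ofReal C := mul_one _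
    -- split into near and far parts
    have hsplit : L i = (∫⁻ ξ in closedBall ω R, G ξ * ENNReal.ofReal (dens (p i) ξ) ∂μ)
        + ∫⁻ ξ in (closedBall ω R)ᶜ, G ξ * ENNReal.ofReal (dens (p i) ξ) ∂μ :=
      (lintegral_add_compl _ measurableSet_closedBall).symm
    have hnear : ∫⁻ ξ in closedBall ω R, G ξ * ENNReal.ofReal (dens (p i) ξ) ∂μ
        ≤ ENNReal.ofReal (ε / 2) := by
      have step1 : ∀ ξ, G ξ * ENNReal.ofReal (dens (p i) ξ)
          ≤ ENNReal.ofReal C * (G ξ * ENNReal.ofReal (Kr ‖ξ - ω‖)) := by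
        intro ξ
        calc G ξ * ENNReal.ofReal (dens (p i) ξ)
            ≤ G ξ * (ENNReal.ofReal C * ENNReal.ofReal (Kr ‖ξ - ω‖)) := by
              refine mul_le_mul_right ?_ _
              rw [← ENNReal.ofReal_mul hCpos.le]
              refine ENNReal.ofReal_le_ofReal ?_
              rw [hdens]
              exact (hcmp ξ).1
          _ = ENNReal.ofReal C * (G ξ * ENNReal.ofReal (Kr ‖ξ - ω‖)) := by ring
      calc ∫⁻ ξ in closedBall ω R, G ξ * ENNReal.ofReal (dens (p i) ξ) ∂μ
          ≤ ∫⁻ ξ in closedBall ω R,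
              ENNReal.ofReal C * (G ξ * ENNReal.ofReal (Kr ‖ξ - ω‖)) ∂μ :=
            lintegral_mono step1
        _ = ENNReal.ofReal C
            * ∫⁻ ξ in closedBall ω R, G ξ * ENNReal.ofReal (Kr ‖ξ - ω‖) ∂μ :=
            lintegral_const_mul' _ _ ENNReal.ofReal_ne_top
        _ ≤ ENNReal.ofReal C
            * (ENNReal.ofReal ε' * ∫⁻ ξ, ENNReal.ofReal (Kr ‖ξ - ω‖) ∂μ) := by
            refine mul_le_mul_right ?_ _
            exact layercake_ball μ ω Kr hKc hK0 hKa G hGmeas (ENNReal.ofReal ε')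
              ENNReal.ofReal_ne_top hball
        _ ≤ ENNReal.ofReal C * (ENNReal.ofReal ε' * ENNReal.ofReal C) := by
            exact mul_le_mul_right (mul_le_mul_right hKint _) _
        _ = ENNReal.ofReal (C * (ε' * C)) := by
            rw [ENNReal.ofReal_mul hCpos.le, ENNReal.ofReal_mul hε'pos.le]
        _ ≤ ENNReal.ofReal (ε / 2) := by
            refine ENNReal.ofReal_le_ofReal ?_
            have heq : C * (ε' * C) = ε * C ^ 2 / (2 * (C ^ 2 + 1)) := by
              rw [hε'def]; ring
            rw [heq, div_le_iff₀ (by positivity)]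
            nlinarith [hε.le, sq_nonneg C]
    have hfar : ∫⁻ ξ in (closedBall ω R)ᶜ, G ξ * ENNReal.ofReal (dens (p i) ξ) ∂μ
        ≤ ENNReal.ofReal (ε / 2) := by
      have step1 : ∀ ξ ∈ (closedBall ω R)ᶜ, G ξ * ENNReal.ofReal (dens (p i) ξ)
          ≤ ENNReal.ofReal ((Cf * t) ^ δ) * G ξ := by
        intro ξ hξ
        have hξR : R ≤ ‖ξ - ω‖ := by
          simp only [Set.mem_compl_iff, mem_closedBall, dist_eq_norm, not_le] at hξ
          exact hξ.le
        have hd := far_bound hδ htpos ha hRpos x ω ξ (hcone i) htiR htia hξR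
        calc G ξ * ENNReal.ofReal (dens (p i) ξ)
            ≤ G ξ * ENNReal.ofReal ((Cf * t) ^ δ) := by
              refine mul_le_mul_right (ENNReal.ofReal_le_ofReal ?_) _
              rw [hdens]
              exact hd
          _ = ENNReal.ofReal ((Cf * t) ^ δ) * G ξ := mul_comm _ _
      calc ∫⁻ ξ in (closedBall ω R)ᶜ, G ξ * ENNReal.ofReal (dens (p i) ξ) ∂μ
          ≤ ∫⁻ ξ in (closedBall ω R)ᶜ, ENNReal.ofReal ((Cf * t) ^ δ) * G ξ ∂μ :=
            setLIntegral_mono (measurable_const.mul hGmeas) step1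
        _ = ENNReal.ofReal ((Cf * t) ^ δ) * ∫⁻ ξ in (closedBall ω R)ᶜ, G ξ ∂μ :=
            lintegral_const_mul' _ _ ENNReal.ofReal_ne_top
        _ ≤ ENNReal.ofReal ((Cf * t) ^ δ) * ∫⁻ ξ, G ξ ∂μ :=
            mul_le_mul_right (lintegral_mono' Measure.restrict_le_self le_rfl) _
        _ = ENNReal.ofReal ((Cf * t) ^ δ) * ENNReal.ofReal Mr := by
            rw [hMrdef, ENNReal.ofReal_toReal hMgne]
        _ = ENNReal.ofReal ((Cf * t) ^ δ * Mr) :=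
            (ENNReal.ofReal_mul (Real.rpow_nonneg (by positivity) _)).symm
        _ ≤ ENNReal.ofReal (ε / 2) := by
            refine ENNReal.ofReal_le_ofReal ?_
            have hb1 : (Cf * t) ^ δ ≤ ε / (2 * (Mr + 1)) := by
              calc (Cf * t) ^ δ ≤ η ^ δ :=
                    Real.rpow_le_rpow (by positivity) htiη hδ.le
                _ = ε / (2 * (Mr + 1)) := by
                    rw [hηdef]
                    exact Real.rpow_inv_rpow (by positivity) hδ.ne'
            have hb2 : ε / (2 * (Mr + 1)) * Mr ≤ ε / 2 := by
              rw [div_mul_eq_mul_div, div_le_div_iff₀ (by positivity) (by norm_num)]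
              nlinarith [hε.le, hMrnn]
            nlinarith [mul_le_mul_of_nonneg_right hb1 hMrnn,
              Real.rpow_nonneg (mul_nonneg hCfpos.le htpos.le) δ]
    calc L i = _ := hsplit
      _ ≤ ENNReal.ofReal (ε / 2) + ENNReal.ofReal (ε / 2) := add_le_add hnear hfar
      _ = ENNReal.ofReal ε := by
          rw [← ENNReal.ofReal_add (by positivity) (by positivity)]
          norm_num
  -- conclude
  have hL0 : Tendsto L atTop (𝓝 0) := by
    rw [ENNReal.tendsto_nhds_zero]
    intro ε hε
    rcases eq_or_ne ε ⊤ with rfl | hεtop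
    · exact Eventually.of_forall fun i => le_top
    · refine (key ε.toReal (ENNReal.toReal_pos hε.ne' hεtop)).mono fun i hi => ?_
      rwa [ENNReal.ofReal_toReal hεtop] at hi
  have hbound : ∀ i, ‖(∫ ξ, f' ξ * dens (p i) ξ ∂μ) - f' ω‖ ≤ (L i).toReal := by
    intro i
    have hmain : (∫ ξ, f' ξ * dens (p i) ξ ∂μ) - f' ω
        = ∫ ξ, (f' ξ - f' ω) * dens (p i) ξ ∂μ := by
      have e1 : ∫ ξ, (f' ξ - f' ω) * dens (p i) ξ ∂μ
          = ∫ ξ, (f' ξ * dens (p i) ξ - f' ω * dens (p i) ξ) ∂μ := by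
        congr 1
        funext ξ
        ring
      rw [e1, integral_sub (hf'd i) ((hdint i).const_mul _), integral_const_mul,
        hmass _ (hporb i), mul_one]
    rw [hmain]
    have e2 : ENNReal.ofReal (∫ ξ, ‖(f' ξ - f' ω) * dens (p i) ξ‖ ∂μ) = L i := by
      rw [ofReal_integral_eq_lintegral_ofReal (hfdint (f' ω) i).norm
        (Eventually.of_forall fun ξ => norm_nonneg _)]
      simp only [hLdef, hGdef, hgdef]
      congr 1
      funext ξ
      rw [norm_mul, ENNReal.ofReal_mul (norm_nonneg _)]
      congr 1
      rw [Real.norm_eq_abs, abs_of_nonneg (hdnn i ξ)]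
    calc ‖∫ ξ, (f' ξ - f' ω) * dens (p i) ξ ∂μ‖
        ≤ ∫ ξ, ‖(f' ξ - f' ω) * dens (p i) ξ‖ ∂μ := norm_integral_le_integral_norm _
      _ = (L i).toReal := by
          rw [← e2, ENNReal.toReal_ofReal (integral_nonneg fun ξ => norm_nonneg _)]
  have hLr : Tendsto (fun i => (L i).toReal) atTop (𝓝 0) := by
    have h := (ENNReal.tendsto_toReal (by simp : (0:ℝ≥0∞) ≠ ⊤)).comp hL0
    simpa [Function.comp_def] using h
  have hfinal : Tendsto (fun i => ∫ ξ, f' ξ * dens (p i) ξ ∂μ) atTop (𝓝 (f' ω)) := by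
    have h := (squeeze_zero_norm hbound hLr).add_const (f' ω)
    simpa using h
  rw [h2]
  exact Tendsto.congr (fun i => (hIeq i).symm) hfinal
end
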